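/- Let G be a finite connected simple graph, and for a vertex v set d_T(v) = ∑_{T spanning tree of G} deg_T(v), the sum over all spanning trees T of the degree of v in T. If the constant edge valuation (f ≡ 1) maximizes the weighted tree number τ over C(G), then the ratio d_T(v)/deg(v) is the same for all vertices v of G. -/

import Mathlib

open Matrix Finset
open scoped Classical

namespace ExtremalGraphs

variable {V : Type*} [Fintype V] [DecidableEq V] (G : SimpleGraph V) [DecidableRel G.Adj]

/-- `P(G)`: the space of edge valuations: positive weights with total weight `|E(G)|`. -/
def PSpace : Set (G.edgeSet → ℝ) :=
  {f | (∀ e, 0 < f e) ∧ ∑ e, f e = (Fintype.card G.edgeSet : ℝ)}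

/-- `C(G)`: valuations in `P(G)` of the form `f(vw) = g(v) + g(w)` for a positive
vertex function `g`. -/
def CSpace : Set (G.edgeSet → ℝ) :=
  {f | f ∈ PSpace G ∧
    ∃ g : V → ℝ, (∀ v, 0 < g v) ∧
      ∀ (v w : V) (h : G.Adj v w), f ⟨s(v, w), G.mem_edgeSet.mpr h⟩ = g v + g w}

/-- A finite set `t` of edges of `G` is a spanning tree of `G` if the simple graph on
`V` with exactly those edges is a tree (connected, so spanning, and acyclic). -/
def IsSpanningTree (t : Finset G.edgeSet) : Prop :=
  (SimpleGraph.fromEdgeSet ((fun e : G.edgeSet => (e : Sym2 V)) '' ↑t)).IsTree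

/-- The weighted tree number `τ_f(G) = ∑_{T spanning tree of G} ∏_{e ∈ T} f(e)`. -/
noncomputable def tau (f : G.edgeSet → ℝ) : ℝ :=
  ∑ t : Finset G.edgeSet, if IsSpanningTree G t then ∏ e ∈ t, f e else 0

/-- `d_T(v)`: the sum, over all spanning trees `T` of `G`, of the degree of `v` in `T`. -/
noncomputable def dT (v : V) : ℕ :=
  ∑ t : Finset G.edgeSet,
    if IsSpanningTree G t then (t.filter fun e => v ∈ (e : Sym2 V)).card else 0

/-- edge valuation induced by a vertex function. -/
noncomputable def edgeVal (k : V → ℝ) : G.edgeSet → ℝ :=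
  fun e => Sym2.lift ⟨fun a b => k a + k b, fun a b => by ring⟩ (e : Sym2 V)

lemma edgeVal_mk (k : V → ℝ) (a b : V) (h : s(a, b) ∈ G.edgeSet) :
    edgeVal G k ⟨s(a, b), h⟩ = k a + k b := rfl

lemma edgeVal_pos {k : V → ℝ} (hk : ∀ u, 0 < k u) (e : G.edgeSet) :
    0 < edgeVal G k e := by
  rcases e with ⟨e, he⟩
  induction e using Sym2.ind with
  | _ a b => exact add_pos (hk a) (hk b)

lemma edgeVal_eq_sum (k : V → ℝ) (e : G.edgeSet) :
    edgeVal G k e = ∑ u, if u ∈ (e : Sym2 V) then k u else 0 := by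
  rcases e with ⟨e, he⟩
  induction e using Sym2.ind with
  | _ a b =>
    have hab : a ≠ b := G.ne_of_adj (G.mem_edgeSet.mp he)
    have key : ∀ u : V, (if u ∈ s(a, b) then k u else 0)
        = (if u = a then k u else 0) + (if u = b then k u else 0) := by
      intro u
      by_cases h1 : u = a <;> by_cases h2 : u = b <;>
        simp [h1, h2, Sym2.mem_iff, hab] <;> simp_all
    simp only [key, Finset.sum_add_distrib, Finset.sum_ite_eq' Finset.univ,
      Finset.mem_univ, if_true]
    rfl

lemma sum_edgeVal (k : V → ℝ) (s : Finset G.edgeSet) :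
    ∑ e ∈ s, edgeVal G k e
      = ∑ u, k u * ((s.filter fun e : G.edgeSet => u ∈ (e : Sym2 V)).card : ℝ) := by
  simp only [edgeVal_eq_sum]
  rw [Finset.sum_comm]
  refine Finset.sum_congr rfl fun u _ => ?_
  rw [← Finset.sum_filter, Finset.sum_const, nsmul_eq_mul, mul_comm]

lemma card_filter_mem_eq_degree (u : V) :
    ((Finset.univ.filter fun e : G.edgeSet => u ∈ (e : Sym2 V)).card) = G.degree u := by
  rw [← Fintype.card_subtype, ← SimpleGraph.card_incidenceSet_eq_degree]
  apply Fintype.card_congr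
  exact
    { toFun := fun e => ⟨e.1.1, e.1.2, e.2⟩
      invFun := fun e => ⟨⟨e.1, e.2.1⟩, e.2.2⟩
      left_inv := fun e => rfl
      right_inv := fun e => rfl }

/-- bridge between the coerced filter appearing in `dT` and the subtype filter. -/
lemma card_filter_coe (u : V) (t : Finset G.edgeSet) :
    (t.filter fun e => u ∈ (e : Sym2 V)).card
      = (t.filter fun e : G.edgeSet => u ∈ (e : Sym2 V)).card := by
  have h1 : (do let a ← t; pure (↑a : Sym2 V))
      = t.image (fun e : G.edgeSet => (e : Sym2 V)) := by
    ext x; simp [Finset.image, Bind.bind]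
  rw [h1, Finset.filter_image, Finset.card_image_of_injective _ Subtype.val_injective]

/-- If the constant edge valuation `f ≡ 1` maximizes the weighted tree
number `τ` over `C(G)`, then the ratio `d_T(v)/deg v` is the same for all vertices. -/
theorem dT_deg_ratio_constant (hG : G.Connected)
    (hone : (fun _ => (1 : ℝ)) ∈ CSpace G)
    (hmax : ∀ g ∈ CSpace G, tau G g ≤ tau G (fun _ => (1 : ℝ))) :
    ∀ v w : V, (dT G v : ℝ) / (G.degree v : ℝ) = (dT G w : ℝ) / (G.degree w : ℝ) := by
  intro v w
  rcases eq_or_ne v w with rfl | hvw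
  · rfl
  -- positive degrees
  have hadj : ∀ a b : V, a ≠ b → ∃ u, G.Adj a u := by
    intro a b hab
    obtain ⟨p⟩ := hG.preconnected a b
    cases p with
    | nil => exact absurd rfl hab
    | cons h _ => exact ⟨_, h⟩
  have hdv : 0 < G.degree v := (SimpleGraph.degree_pos_iff_exists_adj G v).mpr (hadj v w hvw)
  have hdw : 0 < G.degree w := (SimpleGraph.degree_pos_iff_exists_adj G w).mpr (hadj w v hvw.symm)
  set dv : ℝ := (G.degree v : ℝ) with hdv_def
  set dw : ℝ := (G.degree w : ℝ) with hdw_def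
  have hdv0 : 0 < dv := by rw [hdv_def]; exact_mod_cast hdv
  have hdw0 : 0 < dw := by rw [hdw_def]; exact_mod_cast hdw
  obtain ⟨-, g, hgpos, hgadj⟩ := hone
  have hgadj' : ∀ a b : V, G.Adj a b → g a + g b = 1 := fun a b hab =>
    (hgadj a b hab).symm
  -- the perturbation direction
  set h : V → ℝ := fun u =>
    (if u = v then dv⁻¹ else 0) - (if u = w then dw⁻¹ else 0) with hh_def
  set M : ℝ := dv⁻¹ + dw⁻¹ with hM_def
  have hM0 : 0 < M := by positivity
  have hbound : ∀ u, |h u| ≤ M := by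
    intro u
    simp only [hh_def, hM_def]
    have h1 : (0:ℝ) ≤ dv⁻¹ := by positivity
    have h2 : (0:ℝ) ≤ dw⁻¹ := by positivity
    by_cases e1 : u = v
    · subst e1
      rw [if_pos rfl, if_neg hvw, sub_zero, abs_of_nonneg h1]
      linarith
    · rw [if_neg e1]
      by_cases e2 : u = w
      · rw [if_pos e2, zero_sub, abs_neg, abs_of_nonneg h2]
        linarith
      · rw [if_neg e2, sub_zero, abs_zero]
        linarith
  set c : G.edgeSet → ℝ := edgeVal G h with hc_def
  -- sum over filters of h
  have hsum_h : ∀ s : Finset G.edgeSet, ∑ e ∈ s, c e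
      = dv⁻¹ * ((s.filter fun e : G.edgeSet => v ∈ (e : Sym2 V)).card : ℝ)
        - dw⁻¹ * ((s.filter fun e : G.edgeSet => w ∈ (e : Sym2 V)).card : ℝ) := by
    intro s
    rw [hc_def, sum_edgeVal]
    simp only [hh_def, sub_mul, ite_mul, zero_mul, Finset.sum_sub_distrib,
      Finset.sum_ite_eq', Finset.mem_univ, if_true]
  have hsum_c : ∑ e, c e = 0 := by
    rw [hsum_h Finset.univ, card_filter_mem_eq_degree, card_filter_mem_eq_degree,
      ← hdv_def, ← hdw_def]
    field_simp
    ring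
  -- the perturbed valuation
  have key1 : ∀ t : ℝ, edgeVal G (fun u => g u + t * h u) = fun e => 1 + t * c e := by
    intro t
    funext e
    rcases e with ⟨e, he⟩
    induction e using Sym2.ind with
    | _ a b =>
      have h1 : g a + g b = 1 := hgadj' a b (G.mem_edgeSet.mp he)
      show (g a + t * h a) + (g b + t * h b) = 1 + t * (h a + h b)
      rw [← h1]; ring
  -- lower bound on g
  have hVne : (Finset.univ : Finset V).Nonempty := ⟨v, Finset.mem_univ v⟩
  set b : ℝ := Finset.univ.inf' hVne g with hb_def
  have hb0 : 0 < b := by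
    rw [hb_def, Finset.lt_inf'_iff]
    exact fun u _ => hgpos u
  have hble : ∀ u, b ≤ g u := fun u => Finset.inf'_le g (Finset.mem_univ u)
  set ε : ℝ := b / M with hε_def
  have hε0 : 0 < ε := by positivity
  -- membership in CSpace for small t
  have hmem : ∀ t : ℝ, |t| < ε → (fun e => 1 + t * c e) ∈ CSpace G := by
    intro t ht
    have hgt : ∀ u, 0 < g u + t * h u := by
      intro u
      have h1 : |t * h u| ≤ |t| * M := by
        rw [abs_mul]
        exact mul_le_mul_of_nonneg_left (hbound u) (abs_nonneg t)
      have h2 : |t| * M < b := by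
        calc |t| * M < ε * M := mul_lt_mul_of_pos_right ht hM0
          _ = b := div_mul_cancel₀ b hM0.ne'
      have h3 := neg_abs_le (t * h u)
      have h4 := hble u
      nlinarith
    have hval : ∀ e : G.edgeSet, (1 : ℝ) + t * c e
        = edgeVal G (fun u => g u + t * h u) e := by
      intro e; rw [key1]
    refine ⟨⟨fun e => ?_, ?_⟩, fun u => g u + t * h u, hgt, fun a b' hab => ?_⟩
    · show 0 < 1 + t * c e
      rw [hval e]; exact edgeVal_pos G hgt e
    · simp only [Finset.sum_add_distrib, ← Finset.mul_sum, hsum_c, mul_zero,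
        add_zero, Finset.sum_const, Finset.card_univ, nsmul_eq_mul, mul_one]
    · show (1 : ℝ) + t * c ⟨s(a, b'), G.mem_edgeSet.mpr hab⟩
          = g a + t * h a + (g b' + t * h b')
      rw [hval ⟨s(a, b'), G.mem_edgeSet.mpr hab⟩, edgeVal_mk]
  -- the function to differentiate
  set φ : ℝ → ℝ := fun t => tau G (fun e => 1 + t * c e) with hφ_def
  have hφ0 : φ 0 = tau G (fun _ => (1 : ℝ)) := by
    show tau G (fun e => 1 + (0 : ℝ) * c e) = tau G (fun _ => (1 : ℝ))
    congr 1
    funext e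
    simp
  have hlocal : IsLocalMax φ 0 := by
    filter_upwards [Metric.ball_mem_nhds (0 : ℝ) hε0] with t ht
    rw [Metric.mem_ball, Real.dist_eq, sub_zero] at ht
    rw [hφ0]
    exact hmax _ (hmem t ht)
  set D : ℝ := ∑ T : Finset G.edgeSet,
    if IsSpanningTree G T then ∑ e ∈ T, c e else 0 with hD_def
  have hderiv : HasDerivAt φ D 0 := by
    rw [hφ_def, hD_def]
    show HasDerivAt (fun t : ℝ => ∑ T : Finset G.edgeSet,
      if IsSpanningTree G T then ∏ e ∈ T, (1 + t * c e) else 0) _ 0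
    apply HasDerivAt.fun_sum
    intro T _
    by_cases hT : IsSpanningTree G T
    · simp only [hT, if_true]
      have hprod : HasDerivAt (fun t : ℝ => ∏ e ∈ T, (1 + t * c e))
          (∑ e ∈ T, (∏ j ∈ T.erase e, (1 + (0:ℝ) * c j)) * c e) 0 := by
        apply HasDerivAt.fun_finset_prod
        intro e _
        exact (hasDerivAt_mul_const (c e)).const_add 1
      have heq : (∑ e ∈ T, (∏ j ∈ T.erase e, (1 + (0:ℝ) * c j)) * c e)
          = ∑ e ∈ T, c e := by
        refine Finset.sum_congr rfl fun e _ => ?_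
        simp
      rwa [heq] at hprod
    · simp only [hT, if_false]
      exact hasDerivAt_const 0 0
  have hD0 : D = 0 := by
    have h1 := hlocal.deriv_eq_zero
    rwa [hderiv.deriv] at h1
  -- compute D
  have hdTcast : ∀ u : V, (dT G u : ℝ) = ∑ T : Finset G.edgeSet,
      if IsSpanningTree G T
      then ((T.filter fun e : G.edgeSet => u ∈ (e : Sym2 V)).card : ℝ) else 0 := by
    intro u
    rw [dT, Nat.cast_sum]
    refine Finset.sum_congr rfl fun T _ => ?_
    rw [apply_ite (Nat.cast : ℕ → ℝ), Nat.cast_zero, card_filter_coe]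
  have hDval : D = (dT G v : ℝ) * dv⁻¹ - (dT G w : ℝ) * dw⁻¹ := by
    rw [hD_def, hdTcast, hdTcast, Finset.sum_mul, Finset.sum_mul,
      ← Finset.sum_sub_distrib]
    refine Finset.sum_congr rfl fun T _ => ?_
    by_cases hT : IsSpanningTree G T
    · simp only [hT, if_true, hsum_h T]; ring
    · simp [hT]
  rw [hDval] at hD0
  rw [div_eq_mul_inv, div_eq_mul_inv]
  linarith

end ExtremalGraphs
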